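/- arXiv:2603.16613 — 2 statements merged into one kernel-verified Lean document; each statement's English description precedes it below -/
import Mathlib

section
/- Let G be a reflexive digraph admitting an Olšák polymorphism. Then the K-equivalence of G coincides with the D-equivalence of G. -/
namespace DigraphHM6

/-- `f` is a polymorphism of the digraph `(V, E)`. -/
def IsPoly {V : Type*} (E : V → V → Prop) {n : ℕ} (f : (Fin n → V) → V) : Prop :=
  ∀ a b : Fin n → V, (∀ i, E (a i) (b i)) → E (f a) (f b)

/-- `f` is idempotent. -/
def IsIdem {V : Type*} {n : ℕ} (f : (Fin n → V) → V) : Prop :=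
  ∀ x : V, f (fun _ => x) = x

/-- `o` is an Olšák operation: a 6-ary idempotent operation satisfying
`o(x,x,x,y,y,y) = o(x,y,y,x,x,y) = o(y,x,y,x,y,x)`. -/
def IsOlsak {V : Type*} (o : (Fin 6 → V) → V) : Prop :=
  IsIdem o ∧ ∀ x y : V,
    o ![x, x, x, y, y, y] = o ![x, y, y, x, x, y] ∧
    o ![x, y, y, x, x, y] = o ![y, x, y, x, y, x]

/-- `φ` is a digraph homomorphism from `(W, EH)` to `(V, EG)`. -/
def IsHom {W V : Type*} (EH : W → W → Prop) (EG : V → V → Prop) (φ : W → V) : Prop :=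
  ∀ u v : W, EH u v → EG (φ u) (φ v)

/-- The `H`-equivalence of `G`: the equivalence relation generated by the relation
holding between `g` and `g'` whenever they both lie in the range of a homomorphism
from `H` to `G`. -/
def HEqv {W V : Type*} (EH : W → W → Prop) (EG : V → V → Prop) : V → V → Prop :=
  Relation.EqvGen (fun g g' =>
    ∃ φ : W → V, IsHom EH EG φ ∧ (∃ u, φ u = g) ∧ (∃ v, φ v = g'))

/-- The reflexive digraph `D` on `{0,1,2}` with non-loop edges
`0 → 1`, `1 → 0`, `1 → 2`, `2 → 0`. -/
def DEdge : Fin 3 → Fin 3 → Prop := fun a b =>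
  a = b ∨ (a = 0 ∧ b = 1) ∨ (a = 1 ∧ b = 0) ∨ (a = 1 ∧ b = 2) ∨ (a = 2 ∧ b = 0)

/-- The reflexive digraph `K` on `{0,1,2,3}` with non-loop edges
`0 → 1`, `1 → 0`, `1 → 2`, `2 → 3`, `3 → 2`, `3 → 0`. -/
def KEdge : Fin 4 → Fin 4 → Prop := fun a b =>
  a = b ∨ (a = 0 ∧ b = 1) ∨ (a = 1 ∧ b = 0) ∨ (a = 1 ∧ b = 2) ∨
    (a = 2 ∧ b = 3) ∨ (a = 3 ∧ b = 2) ∨ (a = 3 ∧ b = 0)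

/-- If a reflexive digraph admits an Olšák polymorphism, then its `K`-equivalence
coincides with its `D`-equivalence. -/
theorem kEqv_eq_dEqv_of_olsak {V : Type*} (E : V → V → Prop)
    (hrefl : ∀ v, E v v) (o : (Fin 6 → V) → V)
    (hpoly : IsPoly E o) (holsak : IsOlsak o) :
    ∀ a b : V, HEqv KEdge E a b ↔ HEqv DEdge E a b := by
  obtain ⟨hidem, hid⟩ := holsak
  -- A D-homomorphism triple makes its entries D-equivalent.
  have dgen : ∀ x y z : V, E x y → E y x → E y z → E z x →
      HEqv DEdge E x y ∧ HEqv DEdge E x z := by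
    intro x y z hxy hyx hyz hzx
    have hhom : IsHom DEdge E (fun i => if i = 0 then x else if i = 1 then y else z) := by
      rintro u v (h | ⟨h1, h2⟩ | ⟨h1, h2⟩ | ⟨h1, h2⟩ | ⟨h1, h2⟩) <;> subst_vars
      · exact hrefl _
      · exact hxy
      · exact hyx
      · exact hyz
      · exact hzx
    exact ⟨Relation.EqvGen.rel _ _ ⟨_, hhom, ⟨0, rfl⟩, ⟨1, rfl⟩⟩,
           Relation.EqvGen.rel _ _ ⟨_, hhom, ⟨0, rfl⟩, ⟨2, rfl⟩⟩⟩
  -- The key step, using the Olšák polymorphism.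
  have key : ∀ a b c d : V, E a b → E b a → E b c → E c d → E d c → E d a →
      HEqv DEdge E a c := by
    intro a b c d hab hba hbc hcd hdc hda
    have haa := hrefl a; have hbb := hrefl b; have hcc := hrefl c; have hdd := hrefl d
    have idba1 := (hid b a).1
    have idda2 := (hid d a).2
    have idca2 := (hid c a).2
    have iddc1 := (hid d c).1
    -- Triple 1 : (a, o![b,a,a,a,b,b], o![b,b,b,a,a,a])
    have t1xy : E a (o ![b,a,a,a,b,b]) := by
      have h := hpoly (fun _ => a) ![b,a,a,a,b,b] (by intro i; fin_cases i <;> assumption)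
      rwa [hidem] at h
    have t1yx : E (o ![b,a,a,a,b,b]) a := by
      have h := hpoly ![b,a,a,a,b,b] (fun _ => a) (by intro i; fin_cases i <;> assumption)
      rwa [hidem] at h
    have t1yz : E (o ![b,a,a,a,b,b]) (o ![b,b,b,a,a,a]) :=
      hpoly _ _ (by intro i; fin_cases i <;> assumption)
    have t1zx : E (o ![b,b,b,a,a,a]) a := by
      have h := hpoly ![b,b,b,a,a,a] (fun _ => a) (by intro i; fin_cases i <;> assumption)
      rwa [hidem] at h
    obtain ⟨-, k1⟩ := dgen _ _ _ t1xy t1yx t1yz t1zx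
    -- Triple 2 : (o![b,b,b,c,a,b], o![b,a,a,d,b,a], o![b,b,b,a,a,a])
    have t2xy : E (o ![b,b,b,c,a,b]) (o ![b,a,a,d,b,a]) :=
      hpoly _ _ (by intro i; fin_cases i <;> assumption)
    have t2yx : E (o ![b,a,a,d,b,a]) (o ![b,b,b,c,a,b]) :=
      hpoly _ _ (by intro i; fin_cases i <;> assumption)
    have t2yz : E (o ![b,a,a,d,b,a]) (o ![b,b,b,a,a,a]) :=
      hpoly _ _ (by intro i; fin_cases i <;> assumption)
    have t2zx : E (o ![b,b,b,a,a,a]) (o ![b,b,b,c,a,b]) := by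
      rw [idba1]
      exact hpoly _ _ (by intro i; fin_cases i <;> assumption)
    obtain ⟨k2a, k2b⟩ := dgen _ _ _ t2xy t2yx t2yz t2zx
    -- Triple 3 : (o![c,a,b,d,c,b], o![d,a,a,d,d,a], o![b,a,a,d,b,a])
    have t3xy : E (o ![c,a,b,d,c,b]) (o ![d,a,a,d,d,a]) :=
      hpoly _ _ (by intro i; fin_cases i <;> assumption)
    have t3yx : E (o ![d,a,a,d,d,a]) (o ![c,a,b,d,c,b]) :=
      hpoly _ _ (by intro i; fin_cases i <;> assumption)
    have t3yz : E (o ![d,a,a,d,d,a]) (o ![b,a,a,d,b,a]) := by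
      rw [idda2]
      exact hpoly _ _ (by intro i; fin_cases i <;> assumption)
    have t3zx : E (o ![b,a,a,d,b,a]) (o ![c,a,b,d,c,b]) :=
      hpoly _ _ (by intro i; fin_cases i <;> assumption)
    obtain ⟨-, k3⟩ := dgen _ _ _ t3xy t3yx t3yz t3zx
    -- Triple 4 : (o![c,a,a,c,c,a], o![c,a,b,d,c,b], o![d,b,b,d,d,c])
    have t4xy : E (o ![c,a,a,c,c,a]) (o ![c,a,b,d,c,b]) :=
      hpoly _ _ (by intro i; fin_cases i <;> assumption)
    have t4yx : E (o ![c,a,b,d,c,b]) (o ![c,a,a,c,c,a]) :=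
      hpoly _ _ (by intro i; fin_cases i <;> assumption)
    have t4yz : E (o ![c,a,b,d,c,b]) (o ![d,b,b,d,d,c]) :=
      hpoly _ _ (by intro i; fin_cases i <;> assumption)
    have t4zx : E (o ![d,b,b,d,d,c]) (o ![c,a,a,c,c,a]) := by
      rw [idca2]
      exact hpoly _ _ (by intro i; fin_cases i <;> assumption)
    obtain ⟨k4a, k4b⟩ := dgen _ _ _ t4xy t4yx t4yz t4zx
    -- Triple 5 : (o![c,a,a,c,d,c], o![d,b,b,d,d,c], o![d,c,c,d,d,c])
    have t5xy : E (o ![c,a,a,c,d,c]) (o ![d,b,b,d,d,c]) :=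
      hpoly _ _ (by intro i; fin_cases i <;> assumption)
    have t5yx : E (o ![d,b,b,d,d,c]) (o ![c,a,a,c,d,c]) :=
      hpoly _ _ (by intro i; fin_cases i <;> assumption)
    have t5yz : E (o ![d,b,b,d,d,c]) (o ![d,c,c,d,d,c]) :=
      hpoly _ _ (by intro i; fin_cases i <;> assumption)
    have t5zx : E (o ![d,c,c,d,d,c]) (o ![c,a,a,c,d,c]) := by
      rw [← iddc1]
      exact hpoly _ _ (by intro i; fin_cases i <;> assumption)
    obtain ⟨k5a, k5b⟩ := dgen _ _ _ t5xy t5yx t5yz t5zx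
    -- Triple 6 : (o![d,c,c,d,d,c], d, c)
    have t6xy : E (o ![d,c,c,d,d,c]) d := by
      rw [← iddc1]
      have h := hpoly ![d,d,d,c,c,c] (fun _ => d) (by intro i; fin_cases i <;> assumption)
      rwa [hidem] at h
    have t6yx : E d (o ![d,c,c,d,d,c]) := by
      rw [← iddc1]
      have h := hpoly (fun _ => d) ![d,d,d,c,c,c] (by intro i; fin_cases i <;> assumption)
      rwa [hidem] at h
    have t6zx : E c (o ![d,c,c,d,d,c]) := by
      rw [← iddc1]
      have h := hpoly (fun _ => c) ![d,d,d,c,c,c] (by intro i; fin_cases i <;> assumption)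
      rwa [hidem] at h
    obtain ⟨-, k6⟩ := dgen _ _ _ t6xy t6yx hdc t6zx
    -- chain everything together
    exact Relation.EqvGen.trans _ _ _ k1
      (Relation.EqvGen.trans _ _ _ (Relation.EqvGen.symm _ _ k2b)
        (Relation.EqvGen.trans _ _ _ k2a
          (Relation.EqvGen.trans _ _ _ (Relation.EqvGen.symm _ _ k3)
            (Relation.EqvGen.trans _ _ _ (Relation.EqvGen.symm _ _ k4a)
              (Relation.EqvGen.trans _ _ _ k4b
                (Relation.EqvGen.trans _ _ _ (Relation.EqvGen.symm _ _ k5a)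
                  (Relation.EqvGen.trans _ _ _ k5b k6)))))))
  -- K-equivalence implies D-equivalence
  have kd : ∀ g g' : V, HEqv KEdge E g g' → HEqv DEdge E g g' := by
    intro g g' h
    induction h with
    | rel g g' hr =>
      obtain ⟨φ, hφ, ⟨u, hu⟩, ⟨v, hv⟩⟩ := hr
      subst hu; subst hv
      have hab := hφ 0 1 (Or.inr (Or.inl ⟨rfl, rfl⟩))
      have hba := hφ 1 0 (Or.inr (Or.inr (Or.inl ⟨rfl, rfl⟩)))
      have hbc := hφ 1 2 (Or.inr (Or.inr (Or.inr (Or.inl ⟨rfl, rfl⟩))))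
      have hcd := hφ 2 3 (Or.inr (Or.inr (Or.inr (Or.inr (Or.inl ⟨rfl, rfl⟩)))))
      have hdc := hφ 3 2 (Or.inr (Or.inr (Or.inr (Or.inr (Or.inr (Or.inl ⟨rfl, rfl⟩))))))
      have hda := hφ 3 0 (Or.inr (Or.inr (Or.inr (Or.inr (Or.inr (Or.inr ⟨rfl, rfl⟩))))))
      have h01 := (dgen _ _ _ hab hba hba (hrefl _)).1
      have h23 := (dgen _ _ _ hcd hdc hdc (hrefl _)).1
      have h02 := key _ _ _ _ hab hba hbc hcd hdc hda
      have h03 := Relation.EqvGen.trans _ _ _ h02 h23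
      have h12 := Relation.EqvGen.trans _ _ _ (Relation.EqvGen.symm _ _ h01) h02
      have h13 := Relation.EqvGen.trans _ _ _ (Relation.EqvGen.symm _ _ h01) h03
      fin_cases u <;> fin_cases v <;>
        first
          | exact Relation.EqvGen.refl _
          | exact h01 | exact h02 | exact h03 | exact h12 | exact h13 | exact h23
          | exact Relation.EqvGen.symm _ _ h01
          | exact Relation.EqvGen.symm _ _ h02
          | exact Relation.EqvGen.symm _ _ h03
          | exact Relation.EqvGen.symm _ _ h12
          | exact Relation.EqvGen.symm _ _ h13
          | exact Relation.EqvGen.symm _ _ h23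
    | refl g => exact Relation.EqvGen.refl g
    | symm g g' _ ih => exact Relation.EqvGen.symm _ _ ih
    | trans g g' g'' _ _ ih1 ih2 => exact Relation.EqvGen.trans _ _ _ ih1 ih2
  -- D-equivalence implies K-equivalence (compose with the retraction K → D)
  have dk : ∀ g g' : V, HEqv DEdge E g g' → HEqv KEdge E g g' := by
    intro g g' h
    induction h with
    | rel g g' hr =>
      obtain ⟨ψ, hψ, ⟨u, hu⟩, ⟨v, hv⟩⟩ := hr
      subst hu; subst hv
      set k : Fin 4 → Fin 3 := fun i => if i = 3 then 2 else ⟨min i.val 2, by omega⟩ with hk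
      have hkhom : IsHom KEdge E (ψ ∘ k) := by
        rintro p q (h | ⟨h1,h2⟩ | ⟨h1,h2⟩ | ⟨h1,h2⟩ | ⟨h1,h2⟩ | ⟨h1,h2⟩ | ⟨h1,h2⟩) <;> subst_vars
        · exact hψ _ _ (Or.inl rfl)
        · exact hψ 0 1 (Or.inr (Or.inl ⟨rfl, rfl⟩))
        · exact hψ 1 0 (Or.inr (Or.inr (Or.inl ⟨rfl, rfl⟩)))
        · exact hψ 1 2 (Or.inr (Or.inr (Or.inr (Or.inl ⟨rfl, rfl⟩))))
        · exact hψ 2 2 (Or.inl rfl)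
        · exact hψ 2 2 (Or.inl rfl)
        · exact hψ 2 0 (Or.inr (Or.inr (Or.inr (Or.inr ⟨rfl, rfl⟩))))
      have hkι : ∀ w : Fin 3, k ⟨w.val, by omega⟩ = w := by
        intro w; fin_cases w <;> rfl
      exact Relation.EqvGen.rel _ _ ⟨ψ ∘ k, hkhom,
        ⟨⟨u.val, by omega⟩, by rw [Function.comp_apply, hkι]⟩,
        ⟨⟨v.val, by omega⟩, by rw [Function.comp_apply, hkι]⟩⟩
    | refl g => exact Relation.EqvGen.refl g
    | symm g g' _ ih => exact Relation.EqvGen.symm _ _ ih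
    | trans g g' g'' _ _ ih1 ih2 => exact Relation.EqvGen.trans _ _ _ ih1 ih2
  intro a b
  exact ⟨kd a b, dk a b⟩


end DigraphHM6
end

section
/- Let G be a reflexive digraph and let ν be its radical equivalence. Then ν is the smallest equivalence μ on the vertex set of G such that the quotient digraph G/μ is antisymmetric, i.e., ν has antisymmetric quotient, and every equivalence μ with G/μ antisymmetric contains ν. (A digraph is antisymmetric if A → B and B → A imply A = B.) -/
namespace DigraphHM8

/-- One step of a symmetric path: edges in both directions. -/
def SymStep {V : Type*} (E : V → V → Prop) : V → V → Prop :=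
  fun u v => E u v ∧ E v u

/-- The extreme equivalence: being connected by a symmetric path. -/
def ExtremeEq {V : Type*} (E : V → V → Prop) : V → V → Prop :=
  Relation.ReflTransGen (SymStep E)

/-- The edge relation of the quotient digraph `G/ν`, pulled back to vertices:
`a → b` modulo `ν` iff some `a' ∈ a/ν` and `b' ∈ b/ν` satisfy `E a' b'`.
For an equivalence `ν`, the `ν`-classes `A = a/ν` and `B = b/ν` satisfy `A → B`
in `G/ν` iff `SatEdge E ν a b`. -/
def SatEdge {V : Type*} (E ν : V → V → Prop) : V → V → Prop :=
  fun a b => ∃ a' b', ν a a' ∧ ν b b' ∧ E a' b'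

/-- The increasing sequence `ν₀ ⊆ ν₁ ⊆ …` defining the radical equivalence:
`ν₀` is the extreme equivalence of `G`, and `νᵢ₊₁` relates `a` and `b` iff their
`νᵢ`-classes are related by the extreme equivalence of the quotient `G/νᵢ`. -/
def RadSeq {V : Type*} (E : V → V → Prop) : ℕ → (V → V → Prop)
  | 0 => ExtremeEq E
  | (i + 1) => fun a b => RadSeq E i a b ∨ ExtremeEq (SatEdge E (RadSeq E i)) a b

/-- The radical equivalence `ν = ⋃ᵢ νᵢ`. -/
def Radical {V : Type*} (E : V → V → Prop) : V → V → Prop :=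
  fun a b => ∃ i : ℕ, RadSeq E i a b

/-- The quotient `G/μ` is antisymmetric: whenever there are edges both ways between the
`μ`-classes of `a` and of `b`, those classes are equal. -/
def QuotAntisymm {V : Type*} (E μ : V → V → Prop) : Prop :=
  ∀ a b : V, SatEdge E μ a b → SatEdge E μ b a → μ a b


lemma symStep_symm {V : Type*} (E : V → V → Prop) : Symmetric (SymStep E) :=
  fun _ _ h => ⟨h.2, h.1⟩

lemma extremeEq_equiv {V : Type*} (E : V → V → Prop) : Equivalence (ExtremeEq E) :=
  ⟨fun _ => Relation.ReflTransGen.refl,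
   fun h => by
     haveI : Std.Symm (SymStep E) := ⟨fun a b h => symStep_symm E h⟩
     exact Std.Symm.symm (r := Relation.ReflTransGen (SymStep E)) _ _ h,
   fun h h' => h.trans h'⟩

/-- If `ν a b` for an equivalence `ν` and `E` reflexive, then the classes of `a, b`
are joined by a symmetric edge in the quotient. -/
lemma symStep_satEdge_of {V : Type*} {E ν : V → V → Prop} (hν : Equivalence ν)
    (hrefl : ∀ v, E v v) {a b : V} (h : ν a b) : SymStep (SatEdge E ν) a b :=
  ⟨⟨b, b, h, hν.refl b, hrefl b⟩, ⟨b, b, hν.refl b, h, hrefl b⟩⟩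

lemma radSeq_succ_iff {V : Type*} {E : V → V → Prop} (hrefl : ∀ v, E v v) {i : ℕ}
    (hi : Equivalence (RadSeq E i)) {a b : V} :
    RadSeq E (i + 1) a b ↔ ExtremeEq (SatEdge E (RadSeq E i)) a b := by
  constructor
  · rintro (h | h)
    · exact Relation.ReflTransGen.single (symStep_satEdge_of hi hrefl h)
    · exact h
  · exact fun h => Or.inr h

lemma radSeq_equiv {V : Type*} (E : V → V → Prop) (hrefl : ∀ v, E v v) :
    ∀ i, Equivalence (RadSeq E i) := by
  intro i
  induction i with
  | zero => exact extremeEq_equiv E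
  | succ i ih =>
    have he := extremeEq_equiv (SatEdge E (RadSeq E i))
    refine ⟨fun a => (radSeq_succ_iff hrefl ih).2 (he.refl a),
      fun h => (radSeq_succ_iff hrefl ih).2 (he.symm ((radSeq_succ_iff hrefl ih).1 h)),
      fun h h' => (radSeq_succ_iff hrefl ih).2
        (he.trans ((radSeq_succ_iff hrefl ih).1 h) ((radSeq_succ_iff hrefl ih).1 h'))⟩

lemma radSeq_mono {V : Type*} (E : V → V → Prop) {i j : ℕ} (hij : i ≤ j) {a b : V}
    (h : RadSeq E i a b) : RadSeq E j a b := by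
  induction j with
  | zero => simpa [Nat.le_zero.mp hij] using h
  | succ j ihj =>
    rcases Nat.eq_or_lt_of_le hij with h' | h'
    · subst h'; exact h
    · exact Or.inl (ihj (Nat.lt_succ_iff.mp h'))

/-- For a reflexive digraph `G`, the radical equivalence `ν` is the smallest
equivalence `μ` on the vertex set such that the quotient `G/μ` is antisymmetric:
`ν` is an equivalence with antisymmetric quotient, and every equivalence `μ`
with antisymmetric quotient contains `ν`. -/
theorem radical_smallest_antisymmetric_quotient {V : Type*} (E : V → V → Prop)
    (hrefl : ∀ v, E v v) :
    Equivalence (Radical E) ∧ QuotAntisymm E (Radical E) ∧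
      ∀ μ : V → V → Prop, Equivalence μ → QuotAntisymm E μ →
        ∀ a b : V, Radical E a b → μ a b := by
  have hrs := radSeq_equiv E hrefl
  have hequiv : Equivalence (Radical E) := by
    refine ⟨fun a => ⟨0, (hrs 0).refl a⟩, ?_, ?_⟩
    · rintro a b ⟨i, h⟩; exact ⟨i, (hrs i).symm h⟩
    · rintro a b c ⟨i, h⟩ ⟨j, h'⟩
      exact ⟨max i j, (hrs _).trans (radSeq_mono E (Nat.le_max_left i j) h)
        (radSeq_mono E (Nat.le_max_right i j) h')⟩
  refine ⟨hequiv, ?_, ?_⟩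
  · rintro a b ⟨a', b', ⟨i, ha⟩, ⟨j, hb⟩, hE⟩ ⟨b'', a'', ⟨k, hb'⟩, ⟨l, ha'⟩, hE'⟩
    set n := max (max i j) (max k l) with hn
    have h1 : SatEdge E (RadSeq E n) a b :=
      ⟨a', b', radSeq_mono E (le_trans (Nat.le_max_left i j) (Nat.le_max_left _ _)) ha,
        radSeq_mono E (le_trans (Nat.le_max_right i j) (Nat.le_max_left _ _)) hb, hE⟩
    have h2 : SatEdge E (RadSeq E n) b a :=
      ⟨b'', a'', radSeq_mono E (le_trans (Nat.le_max_left k l) (Nat.le_max_right _ _)) hb',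
        radSeq_mono E (le_trans (Nat.le_max_right k l) (Nat.le_max_right _ _)) ha', hE'⟩
    exact ⟨n + 1, Or.inr (Relation.ReflTransGen.single ⟨h1, h2⟩)⟩
  · rintro μ hμ hanti a b ⟨i, h⟩
    induction i generalizing a b with
    | zero =>
      induction h with
      | refl => exact hμ.refl _
      | tail _ h2 ih2 =>
        exact hμ.trans ih2 (hanti _ _ ⟨_, _, hμ.refl _, hμ.refl _, h2.1⟩
          ⟨_, _, hμ.refl _, hμ.refl _, h2.2⟩)
    | succ i ih =>
      rcases h with h | h
      · exact ih a b h
      · induction h with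
        | refl => exact hμ.refl _
        | tail _ h2 ih2 =>
          obtain ⟨⟨u, v, hu, hv, hE⟩, ⟨u', v', hu', hv', hE'⟩⟩ := h2
          exact hμ.trans ih2 (hanti _ _ ⟨u, v, ih _ _ hu, ih _ _ hv, hE⟩
            ⟨u', v', ih _ _ hu', ih _ _ hv', hE'⟩)


end DigraphHM8
end
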